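/- Let k be an algebraically closed field of characteristic zero, complete with respect to a non-Archimedean multiplicative norm ‖·‖, and let p be a prime with ‖(p : k)‖ < 1. Let f, g ∈ k[X] be coprime with d = max(natDegree f, natDegree g), p ≤ d, and f.eval 0 = 0. Assume g.eval x ≠ 0 and (derivative f · g − f · derivative g).eval x ≠ 0 for every x ∈ k with ‖x‖ < 1. Then f has exactly one root in the open disk of radius ‖(p : k)‖^(1/(p−1)): there exists a unique x ∈ k with ‖x‖ < ‖(p : k)‖^((1 : ℝ)/(p−1)) and f.eval x = 0 (namely x = 0). -/

import Mathlib

open Polynomial Finset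

section AuxiliaryLemmas

variable {k : Type*} [NormedField k] [IsUltrametricDist k]




/-- If each term of a finite sum has norm `< C`, so does the sum (ultrametric). -/
lemma aux_norm_sum_lt {ι : Type*} {s : Finset ι} {F : ι → k} {C : ℝ} (hC : 0 < C)
    (h : ∀ i ∈ s, ‖F i‖ < C) : ‖∑ i ∈ s, F i‖ < C := by
  rcases s.eq_empty_or_nonempty with rfl | hs
  · simpa using hC
  · exact lt_of_le_of_lt (hs.norm_sum_le_sup'_norm F) ((Finset.sup'_lt_iff hs).mpr h)

/-- Coefficient bound for a polynomial with no roots in the open unit disk. -/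
lemma aux_coeff_le [IsAlgClosed k] :
    ∀ (N : ℕ) (P : Polynomial k), P.natDegree ≤ N →
      (∀ z : k, ‖z‖ < 1 → P.eval z ≠ 0) → ∀ n, ‖P.coeff n‖ ≤ ‖P.coeff 0‖ := by
  intro N
  induction N with
  | zero =>
    intro P hdeg _ n
    have hP : P = C (P.coeff 0) := Polynomial.eq_C_of_natDegree_le_zero hdeg
    rcases n with _ | m
    · exact le_rfl
    · rw [hP]; simp
  | succ N ih =>
    intro P hdeg hroots n
    have hP0 : P ≠ 0 := by
      intro h; exact hroots 0 (by simp) (by simp [h])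
    by_cases hd0 : P.natDegree = 0
    · have hP : P = C (P.coeff 0) := Polynomial.eq_C_of_natDegree_le_zero hd0.le
      rcases n with _ | m
      · exact le_rfl
      · rw [hP]; simp
    · have hdeg' : P.degree ≠ 0 := by
        rw [Polynomial.degree_eq_natDegree hP0]
        exact_mod_cast hd0
      obtain ⟨α, hα⟩ := IsAlgClosed.exists_root P hdeg'
      have hα1 : (1 : ℝ) ≤ ‖α‖ := by
        by_contra hlt
        exact hroots α (not_le.mp hlt) hα
      obtain ⟨Q, hQ⟩ := (Polynomial.dvd_iff_isRoot.mpr hα)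
      have hQ0 : Q ≠ 0 := by rintro rfl; simp at hQ; exact hP0 hQ
      have hQroots : ∀ z : k, ‖z‖ < 1 → Q.eval z ≠ 0 := by
        intro z hz hQz
        exact hroots z hz (by simp [hQ, hQz])
      have hQdeg : Q.natDegree ≤ N := by
        have : P.natDegree = 1 + Q.natDegree := by
          rw [hQ, Polynomial.natDegree_mul (Polynomial.X_sub_C_ne_zero α) hQ0,
            Polynomial.natDegree_X_sub_C]
        omega
      have hQb := ih Q hQdeg hQroots
      have hc0 : ‖P.coeff 0‖ = ‖α‖ * ‖Q.coeff 0‖ := by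
        rw [hQ, Polynomial.mul_coeff_zero]
        simp [norm_mul]
      rcases n with _ | m
      · exact le_rfl
      · have hcoeff : P.coeff (m + 1) = Q.coeff m - α * Q.coeff (m + 1) := by
          rw [hQ, sub_mul, Polynomial.coeff_sub, Polynomial.coeff_X_mul, Polynomial.coeff_C_mul]
        rw [hcoeff, hc0]
        have htri : ‖Q.coeff m - α * Q.coeff (m + 1)‖ ≤
            max ‖Q.coeff m‖ ‖α * Q.coeff (m + 1)‖ := by
          rw [sub_eq_add_neg]
          exact le_trans (IsUltrametricDist.norm_add_le_max _ _) (by rw [norm_neg])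
        refine le_trans htri (max_le ?_ ?_)
        · calc ‖Q.coeff m‖ ≤ ‖Q.coeff 0‖ := hQb m
            _ ≤ ‖α‖ * ‖Q.coeff 0‖ := le_mul_of_one_le_left (norm_nonneg _) hα1
        · rw [norm_mul]
          exact mul_le_mul_of_nonneg_left (hQb (m + 1)) (norm_nonneg _)




/-- A natural number coprime to `p` has norm 1 when `‖p‖ < 1`. -/
lemma aux_norm_coprime {p : ℕ} (hp : p.Prime) (hpk : ‖(p : k)‖ < 1)
    {m : ℕ} (hm : ¬ p ∣ m) : ‖(m : k)‖ = 1 := by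
  have hcop : Nat.Coprime p m := (Nat.Prime.coprime_iff_not_dvd hp).mpr hm
  have hbez := Nat.gcd_eq_gcd_ab p m
  rw [hcop] at hbez
  have hk : (1 : k) = (p : k) * ((Nat.gcdA p m : ℤ) : k) + (m : k) * ((Nat.gcdB p m : ℤ) : k) := by
    have := congrArg (fun z : ℤ => ((z : ℤ) : k)) hbez
    push_cast at this ⊢
    simpa using this
  have hm1 : ‖(m : k)‖ ≤ 1 := IsUltrametricDist.norm_natCast_le_one k m
  refine le_antisymm hm1 (not_lt.mp fun hlt => ?_)
  have h1 : (1 : ℝ) ≤ max (‖(p : k) * ((Nat.gcdA p m : ℤ) : k)‖)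
      (‖(m : k) * ((Nat.gcdB p m : ℤ) : k)‖) := by
    calc (1:ℝ) = ‖(1:k)‖ := norm_one.symm
      _ ≤ _ := by rw [hk]; exact IsUltrametricDist.norm_add_le_max _ _
  have hA : ‖(p : k) * ((Nat.gcdA p m : ℤ) : k)‖ < 1 := by
    rw [norm_mul]
    calc ‖(p:k)‖ * ‖((Nat.gcdA p m : ℤ) : k)‖ ≤ ‖(p:k)‖ * 1 :=
          mul_le_mul_of_nonneg_left (IsUltrametricDist.norm_intCast_le_one k _) (norm_nonneg _)
      _ = ‖(p:k)‖ := mul_one _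
      _ < 1 := hpk
  have hB : ‖(m : k) * ((Nat.gcdB p m : ℤ) : k)‖ < 1 := by
    rw [norm_mul]
    calc ‖(m:k)‖ * ‖((Nat.gcdB p m : ℤ) : k)‖ ≤ ‖(m:k)‖ * 1 :=
          mul_le_mul_of_nonneg_left (IsUltrametricDist.norm_intCast_le_one k _) (norm_nonneg _)
      _ = ‖(m:k)‖ := mul_one _
      _ < 1 := hlt
  exact absurd h1 (not_le.mpr (max_lt hA hB))

/-- Norm of a positive natural number in terms of its `p`-adic valuation. -/
lemma aux_norm_natCast {p : ℕ} (hp : p.Prime) (hpk : ‖(p : k)‖ < 1)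
    {j : ℕ} (hj : j ≠ 0) : ‖(j : k)‖ = ‖(p : k)‖ ^ (padicValNat p j) := by
  have hfac : p ^ (padicValNat p j) * (j / p ^ (padicValNat p j)) = j := by
    rw [← Nat.factorization_def j hp]
    exact Nat.ordProj_mul_ordCompl_eq_self j p
  have hnd : ¬ p ∣ (j / p ^ (padicValNat p j)) := by
    rw [← Nat.factorization_def j hp]
    exact Nat.not_dvd_ordCompl hp hj
  calc ‖(j : k)‖ = ‖((p ^ (padicValNat p j) * (j / p ^ (padicValNat p j)) : ℕ) : k)‖ := by
        rw [hfac]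
    _ = ‖(p : k)‖ ^ (padicValNat p j) * ‖((j / p ^ (padicValNat p j) : ℕ) : k)‖ := by
        push_cast; rw [norm_mul, norm_pow]
    _ = ‖(p : k)‖ ^ (padicValNat p j) := by
        rw [aux_norm_coprime hp hpk hnd, mul_one]

/-- `(p-1) * v_p(j) ≤ j - 1`. -/
lemma aux_val_le {p : ℕ} (hp : p.Prime) {j : ℕ} (hj : j ≠ 0) :
    (p - 1) * padicValNat p j + 1 ≤ j := by
  have hple : p ^ (padicValNat p j) ≤ j := by
    rw [← Nat.factorization_def j hp]
    exact Nat.ordProj_le p hj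
  have hbern : ∀ v : ℕ, (p - 1) * v + 1 ≤ p ^ v := by
    intro v
    induction v with
    | zero => simp
    | succ v ih =>
      have hp1 : 1 ≤ p ^ v := Nat.one_le_pow _ _ hp.pos
      have : (p - 1) * (v + 1) + 1 = ((p - 1) * v + 1) + (p - 1) := by ring
      rw [this, pow_succ]
      calc ((p - 1) * v + 1) + (p - 1) ≤ p ^ v + (p - 1) * p ^ v := by
            exact Nat.add_le_add ih (Nat.le_mul_of_pos_right _ hp1)
        _ = (1 + (p - 1)) * p ^ v := by ring
        _ = p ^ v * p := by
            have h2 := hp.two_le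
            have h1p : 1 + (p - 1) = p := by omega
            rw [h1p, mul_comm]
  exact le_trans (hbern _) hple




/-- Coefficient bound for products of power series. -/
lemma aux_coeff_mul_le {A B : PowerSeries k} {CA CB : ℝ}
    (hCA : 0 ≤ CA) (hCB : 0 ≤ CB)
    (hA : ∀ n, ‖PowerSeries.coeff n A‖ ≤ CA)
    (hB : ∀ n, ‖PowerSeries.coeff n B‖ ≤ CB) (n : ℕ) :
    ‖PowerSeries.coeff n (A * B)‖ ≤ CA * CB := by
  rw [PowerSeries.coeff_mul]
  refine IsUltrametricDist.norm_sum_le_of_forall_le_of_nonneg (mul_nonneg hCA hCB) ?_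
  intro i _
  rw [norm_mul]
  exact mul_le_mul (hA _) (hB _) (norm_nonneg _) hCA

/-- Coefficient bound for the inverse of a power series whose coefficients are
dominated by the constant coefficient. -/
lemma aux_coeff_inv_le {G : PowerSeries k} (hG : PowerSeries.constantCoeff G ≠ 0)
    (hb : ∀ n, ‖PowerSeries.coeff n G‖ ≤ ‖PowerSeries.constantCoeff G‖) :
    ∀ n, ‖PowerSeries.coeff n G⁻¹‖ ≤ ‖PowerSeries.constantCoeff G‖⁻¹ := by
  intro n
  induction n using Nat.strong_induction_on with
  | _ n ih =>
    rcases Nat.eq_zero_or_pos n with rfl | hn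
    · rw [PowerSeries.coeff_zero_eq_constantCoeff, PowerSeries.constantCoeff_inv, norm_inv]
    · rw [PowerSeries.coeff_inv]
      rw [if_neg hn.ne']
      rw [norm_mul, norm_neg, norm_inv]
      have hsum : ‖∑ x ∈ antidiagonal n,
          if x.2 < n then PowerSeries.coeff x.1 G * PowerSeries.coeff x.2 G⁻¹ else 0‖ ≤
          ‖PowerSeries.constantCoeff G‖ * ‖PowerSeries.constantCoeff G‖⁻¹ := by
        refine IsUltrametricDist.norm_sum_le_of_forall_le_of_nonneg
          (mul_nonneg (norm_nonneg _) (by positivity)) ?_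
        intro x _
        by_cases hx : x.2 < n
        · rw [if_pos hx, norm_mul]
          exact mul_le_mul (hb _) (ih _ hx) (norm_nonneg _) (norm_nonneg _)
        · rw [if_neg hx, norm_zero]
          positivity
      calc ‖PowerSeries.constantCoeff G‖⁻¹ * ‖∑ x ∈ antidiagonal n,
            if x.2 < n then PowerSeries.coeff x.1 G * PowerSeries.coeff x.2 G⁻¹ else 0‖
          ≤ ‖PowerSeries.constantCoeff G‖⁻¹ *
            (‖PowerSeries.constantCoeff G‖ * ‖PowerSeries.constantCoeff G‖⁻¹) := by
            exact mul_le_mul_of_nonneg_left hsum (by positivity)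
        _ = ‖PowerSeries.constantCoeff G‖⁻¹ := by
            have h0 : ‖PowerSeries.constantCoeff G‖ ≠ 0 := norm_ne_zero_iff.mpr hG
            field_simp

/-- The key norm inequality. -/
lemma aux_key {p : ℕ} (hp : p.Prime) (hpk : ‖(p : k)‖ < 1) (hpk0 : 0 < ‖(p : k)‖)
    {x : k} (hx : ‖x‖ < ‖(p : k)‖ ^ ((1 : ℝ) / ((p : ℝ) - 1)))
    {i n : ℕ} (hi : 1 ≤ i) (hin : i ≤ n) (hn : 2 ≤ n) :
    ‖x‖ ^ (n - 1) < ‖(i : k)‖ := by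
  have hp2 := hp.two_le
  have hexp : 0 < (1 : ℝ) / ((p : ℝ) - 1) := by
    have : (1 : ℝ) ≤ (p : ℝ) - 1 := by
      have : (2 : ℝ) ≤ (p : ℝ) := by exact_mod_cast hp2
      linarith
    positivity
  have hr1 : ‖(p : k)‖ ^ ((1 : ℝ) / ((p : ℝ) - 1)) < 1 :=
    Real.rpow_lt_one hpk0.le hpk hexp
  have hx1 : ‖x‖ < 1 := hx.trans hr1
  rcases eq_or_lt_of_le hi with h1 | h2
  · -- i = 1
    rw [← h1]
    norm_num
    calc ‖x‖ ^ (n - 1) ≤ ‖x‖ := pow_le_of_le_one (norm_nonneg x) hx1.le (by omega)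
      _ < 1 := hx1
  · -- i ≥ 2
    have hi2 : 2 ≤ i := h2
    have hi0 : i ≠ 0 := by omega
    set v := padicValNat p i with hv
    have step1 : ‖x‖ ^ (n - 1) ≤ ‖x‖ ^ (i - 1) :=
      pow_le_pow_of_le_one (norm_nonneg _) hx1.le (by omega)
    have step2 : ‖x‖ ^ (i - 1) < (‖(p : k)‖ ^ ((1 : ℝ) / ((p : ℝ) - 1))) ^ (i - 1) :=
      pow_lt_pow_left₀ hx (norm_nonneg x) (by omega)
    have step3 : (‖(p : k)‖ ^ ((1 : ℝ) / ((p : ℝ) - 1))) ^ (i - 1) ≤ ‖(p : k)‖ ^ v := by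
      have e1 : (‖(p : k)‖ ^ ((1 : ℝ) / ((p : ℝ) - 1))) ^ (i - 1)
          = ‖(p : k)‖ ^ (((1 : ℝ) / ((p : ℝ) - 1)) * ((i - 1 : ℕ) : ℝ)) := by
        rw [← Real.rpow_natCast (‖(p : k)‖ ^ ((1 : ℝ) / ((p : ℝ) - 1))) (i - 1),
          ← Real.rpow_mul hpk0.le]
      have e2 : ‖(p : k)‖ ^ ((v : ℕ) : ℝ) = ‖(p : k)‖ ^ v := Real.rpow_natCast _ v
      rw [e1, ← e2]
      apply Real.rpow_le_rpow_of_exponent_ge hpk0 hpk.le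
      -- (v : ℝ) ≤ (1/(p-1)) * (i-1)
      have hnat := aux_val_le hp hi0
      rw [← hv] at hnat
      have hcast : ((p : ℝ) - 1) * (v : ℝ) ≤ ((i - 1 : ℕ) : ℝ) := by
        have h1 : ((p - 1 : ℕ) : ℝ) * (v : ℝ) ≤ ((i - 1 : ℕ) : ℝ) := by
          exact_mod_cast Nat.le_sub_one_of_lt (by omega : (p - 1) * v < i)
        have h2 : ((p - 1 : ℕ) : ℝ) = (p : ℝ) - 1 := by
          have : (1 : ℕ) ≤ p := hp.one_lt.le
          push_cast [Nat.cast_sub this]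
          ring
        rwa [h2] at h1
      have hpr : (0 : ℝ) < (p : ℝ) - 1 := by
        have : (2 : ℝ) ≤ (p : ℝ) := by exact_mod_cast hp2
        linarith
      rw [one_div, inv_mul_eq_div, le_div_iff₀ hpr]
      linarith [hcast]
    have step4 : ‖(p : k)‖ ^ v = ‖(i : k)‖ := (aux_norm_natCast hp hpk hi0).symm
    calc ‖x‖ ^ (n - 1) ≤ ‖x‖ ^ (i - 1) := step1
      _ < (‖(p : k)‖ ^ ((1 : ℝ) / ((p : ℝ) - 1))) ^ (i - 1) := step2
      _ ≤ ‖(p : k)‖ ^ v := step3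
      _ = ‖(i : k)‖ := step4

end AuxiliaryLemmas

/-- If `φ = f/g` has no pole and no critical point in the open unit disk and
`φ(0) = 0`, then `φ` has exactly one zero in the open disk of radius
`‖p‖^(1/(p−1))` (namely `0`). -/
theorem stmt5 {k : Type*} [NormedField k] [IsAlgClosed k] [CharZero k]
    [CompleteSpace k] [IsUltrametricDist k]
    (p : ℕ) (hp : p.Prime) (hpk : ‖(p : k)‖ < 1)
    (f g : Polynomial k) (hco : IsCoprime f g)
    (hpd : p ≤ max f.natDegree g.natDegree)
    (h0 : f.eval 0 = 0)
    (hpole : ∀ x : k, ‖x‖ < 1 → g.eval x ≠ 0)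
    (hcrit : ∀ x : k, ‖x‖ < 1 → (derivative f * g - f * derivative g).eval x ≠ 0) :
    ∃! x : k, ‖x‖ < ‖(p : k)‖ ^ ((1 : ℝ) / ((p : ℝ) - 1)) ∧ f.eval x = 0 := by
  classical
  have hp2 := hp.two_le
  have hpkne : (p : k) ≠ 0 := Nat.cast_ne_zero.mpr hp.pos.ne'
  have hpk0 : (0 : ℝ) < ‖(p : k)‖ := norm_pos_iff.mpr hpkne
  have hexp : 0 < (1 : ℝ) / ((p : ℝ) - 1) := by
    have h2 : (2 : ℝ) ≤ (p : ℝ) := by exact_mod_cast hp2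
    have : (1 : ℝ) ≤ (p : ℝ) - 1 := by linarith
    positivity
  have hr0 : 0 < ‖(p : k)‖ ^ ((1 : ℝ) / ((p : ℝ) - 1)) := Real.rpow_pos_of_pos hpk0 _
  have hr1 : ‖(p : k)‖ ^ ((1 : ℝ) / ((p : ℝ) - 1)) < 1 := Real.rpow_lt_one hpk0.le hpk hexp
  refine ⟨0, ⟨by simpa using hr0, h0⟩, ?_⟩
  rintro x ⟨hxr, hxf⟩
  by_contra hx0
  have hx1 : ‖x‖ < 1 := hxr.trans hr1
  have hxn0 : 0 < ‖x‖ := norm_pos_iff.mpr hx0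
  set w : Polynomial k := derivative f * g - f * derivative g with hw
  have hg0 : g.eval 0 ≠ 0 := hpole 0 (by simp)
  have hw0 : w.eval 0 ≠ 0 := hcrit 0 (by simp)
  -- power series setup
  set G : PowerSeries k := (g : PowerSeries k) with hG
  have hGc0 : PowerSeries.constantCoeff G = g.eval 0 := by
    rw [hG, ← PowerSeries.coeff_zero_eq_constantCoeff_apply, Polynomial.coeff_coe,
      Polynomial.coeff_zero_eq_eval_zero]
  have hGc : PowerSeries.constantCoeff G ≠ 0 := by rw [hGc0]; exact hg0
  have hGinv : G * G⁻¹ = 1 := PowerSeries.mul_inv_cancel _ hGc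
  set φ : PowerSeries k := (f : PowerSeries k) * G⁻¹ with hφ
  have hφG : φ * G = (f : PowerSeries k) := by
    rw [hφ, mul_assoc, mul_comm G⁻¹ G, hGinv, mul_one]
  set a : ℕ → k := fun n => PowerSeries.coeff n φ with ha
  have ha0 : a 0 = 0 := by
    have : a 0 = PowerSeries.constantCoeff ((f : PowerSeries k)) *
        PowerSeries.constantCoeff (G⁻¹) := by
      rw [ha]
      simp only [hφ, PowerSeries.coeff_zero_eq_constantCoeff_apply, map_mul]
    rw [this, ← PowerSeries.coeff_zero_eq_constantCoeff_apply (f : PowerSeries k),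
      Polynomial.coeff_coe, Polynomial.coeff_zero_eq_eval_zero, h0, zero_mul]
  -- derivative identity
  have hwcoe : ((w : Polynomial k) : PowerSeries k) =
      PowerSeries.derivativeFun (f : PowerSeries k) * G -
      (f : PowerSeries k) * PowerSeries.derivativeFun G := by
    show _ = PowerSeries.derivative k (f : PowerSeries k) * G - (f : PowerSeries k) * PowerSeries.derivative k G
    rw [hw, hG, PowerSeries.derivativeFun_coe, PowerSeries.derivativeFun_coe]
    push_cast
    ring
  have hid : ((w : Polynomial k) : PowerSeries k) = G * G * PowerSeries.derivativeFun φ := by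
    have hf : (f : PowerSeries k) = φ * G := hφG.symm
    have hleib : PowerSeries.derivativeFun (φ * G) =
        φ * PowerSeries.derivativeFun G + G * PowerSeries.derivativeFun φ := by
      simpa [smul_eq_mul] using PowerSeries.derivativeFun_mul φ G
    rw [hwcoe, hf, hleib]
    ring
  have hder : PowerSeries.derivativeFun φ =
      ((w : Polynomial k) : PowerSeries k) * G⁻¹ * G⁻¹ := by
    have hstep : ((w : Polynomial k) : PowerSeries k) * G⁻¹ * G⁻¹ =
        PowerSeries.derivativeFun φ := by
      rw [hid]
      calc G * G * PowerSeries.derivativeFun φ * G⁻¹ * G⁻¹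
          = PowerSeries.derivativeFun φ * ((G * G⁻¹) * (G * G⁻¹)) := by ring
        _ = PowerSeries.derivativeFun φ := by rw [hGinv]; ring
    exact hstep.symm
  -- coefficient bounds
  have hgb : ∀ n, ‖PowerSeries.coeff n G‖ ≤ ‖g.eval 0‖ := by
    intro n
    rw [hG, Polynomial.coeff_coe]
    have := aux_coeff_le g.natDegree g le_rfl hpole n
    rwa [Polynomial.coeff_zero_eq_eval_zero] at this
  have hwb : ∀ n, ‖PowerSeries.coeff n ((w : Polynomial k) : PowerSeries k)‖ ≤ ‖w.eval 0‖ := by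
    intro n
    rw [Polynomial.coeff_coe]
    have := aux_coeff_le w.natDegree w le_rfl (by rw [hw]; exact hcrit) n
    rwa [Polynomial.coeff_zero_eq_eval_zero] at this
  have hinvb : ∀ n, ‖PowerSeries.coeff n G⁻¹‖ ≤ ‖g.eval 0‖⁻¹ := by
    have := aux_coeff_inv_le hGc (fun n => by rw [hGc0]; exact hgb n)
    intro n
    have h := this n
    rwa [hGc0] at h
  set B : ℝ := ‖w.eval 0‖ * ‖g.eval 0‖⁻¹ * ‖g.eval 0‖⁻¹ with hB
  have hB0 : 0 < B := by
    rw [hB]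
    have h1 : 0 < ‖w.eval 0‖ := norm_pos_iff.mpr hw0
    have h2 : 0 < ‖g.eval 0‖ := norm_pos_iff.mpr hg0
    positivity
  have hdb : ∀ n, ‖PowerSeries.coeff n (PowerSeries.derivativeFun φ)‖ ≤ B := by
    intro n
    rw [hder, hB]
    have h2 : (0:ℝ) ≤ ‖g.eval 0‖⁻¹ := by positivity
    exact aux_coeff_mul_le (mul_nonneg (norm_nonneg _) h2) h2
      (aux_coeff_mul_le (norm_nonneg _) h2 hwb hinvb) hinvb n
  have haj : ∀ j : ℕ, 1 ≤ j → ‖a j‖ * ‖((j : ℕ) : k)‖ ≤ B := by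
    intro j hj
    obtain ⟨n, rfl⟩ : ∃ n, j = n + 1 := ⟨j - 1, by omega⟩
    have := hdb n
    erw [PowerSeries.coeff_derivativeFun] at this
    rw [← norm_mul]
    convert this using 3
    · push_cast; ring
  have ha1 : ‖a 1‖ = B := by
    have e1 : PowerSeries.coeff 0 (PowerSeries.derivativeFun φ) = a 1 := by
      erw [PowerSeries.coeff_derivativeFun]
      simp [ha]
    have e2 : PowerSeries.coeff 0 (PowerSeries.derivativeFun φ)
        = w.eval 0 * (g.eval 0)⁻¹ * (g.eval 0)⁻¹ := by
      rw [hder, PowerSeries.coeff_zero_eq_constantCoeff_apply, map_mul, map_mul,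
        PowerSeries.constantCoeff_inv, hGc0,
        ← PowerSeries.coeff_zero_eq_constantCoeff_apply ((w : Polynomial k) : PowerSeries k),
        Polynomial.coeff_coe, Polynomial.coeff_zero_eq_eval_zero]
    rw [← e1, e2]
    simp [hB, norm_mul, norm_inv]
  -- degree facts
  have hfne : f ≠ 0 := by
    intro hf0
    apply hw0
    rw [hw, hf0]
    simp
  have hD1 : 1 ≤ f.natDegree := by
    by_contra hD
    push_neg at hD
    interval_cases h : f.natDegree
    · have := Polynomial.eq_C_of_natDegree_le_zero (le_of_eq h)
      rw [this, Polynomial.coeff_zero_eq_eval_zero, h0] at hfne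
      simp at hfne
  -- final evaluation
  set C : ℝ := B * ‖g.eval 0‖ * ‖x‖ with hC
  have hC0 : 0 < C := by
    rw [hC]
    have h2 : 0 < ‖g.eval 0‖ := norm_pos_iff.mpr hg0
    positivity
  have hcoefff : ∀ n, f.coeff n =
      ∑ ij ∈ antidiagonal n, a ij.1 * PowerSeries.coeff ij.2 G := by
    intro n
    rw [← Polynomial.coeff_coe, ← hφG, PowerSeries.coeff_mul]
  set c : k := a 1 * g.eval 0 * x with hcdef
  have hcnorm : ‖c‖ = C := by
    rw [hcdef, hC, norm_mul, norm_mul, ha1]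
  have heval : f.eval x = ∑ n ∈ range (f.natDegree + 1),
      ∑ ij ∈ antidiagonal n, a ij.1 * PowerSeries.coeff ij.2 G * x ^ n := by
    rw [Polynomial.eval_eq_sum_range]
    refine Finset.sum_congr rfl fun n _ => ?_
    rw [hcoefff, Finset.sum_mul]
  have ht1 : ∑ ij ∈ antidiagonal 1, a ij.1 * PowerSeries.coeff ij.2 G * x ^ 1 = c := by
    rw [show (1 : ℕ) = 0 + 1 from rfl, Finset.Nat.sum_antidiagonal_succ]
    simp only [Finset.Nat.antidiagonal_zero, Finset.sum_singleton]
    rw [ha0]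
    simp only [zero_mul, zero_add]
    have hco0 : PowerSeries.coeff 0 (g : PowerSeries k) = g.eval 0 := by
      rw [Polynomial.coeff_coe, Polynomial.coeff_zero_eq_eval_zero]
    rw [hco0, hcdef]
    ring
  have hfinal : ‖f.eval x - c‖ < C := by
    rw [heval]
    have hsplit : (∑ n ∈ range (f.natDegree + 1),
        ∑ ij ∈ antidiagonal n, a ij.1 * PowerSeries.coeff ij.2 G * x ^ n) - c =
        ∑ n ∈ range (f.natDegree + 1),
        ((∑ ij ∈ antidiagonal n, a ij.1 * PowerSeries.coeff ij.2 G * x ^ n) -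
          if n = 1 then c else 0) := by
      rw [Finset.sum_sub_distrib, Finset.sum_ite_eq' (range (f.natDegree + 1)) 1 (fun _ => c),
        if_pos (Finset.mem_range.mpr (by omega))]
    rw [hsplit]
    apply aux_norm_sum_lt hC0
    intro n hn
    by_cases hn1 : n = 1
    · subst hn1
      rw [if_pos rfl, ht1, sub_self, norm_zero]
      exact hC0
    · rw [if_neg hn1, sub_zero]
      apply aux_norm_sum_lt hC0
      intro ij hij
      have hij' : ij.1 + ij.2 = n := Finset.HasAntidiagonal.mem_antidiagonal.mp hij
      by_cases hi0 : ij.1 = 0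
      · rw [hi0, ha0, zero_mul, zero_mul, norm_zero]
        exact hC0
      · have hi1 : 1 ≤ ij.1 := Nat.one_le_iff_ne_zero.mpr hi0
        have hn2 : 2 ≤ n := by omega
        have hkey := aux_key hp hpk hpk0 hxr hi1 (by omega : ij.1 ≤ n) hn2
        have hjk0 : (0 : ℝ) < ‖((ij.1 : ℕ) : k)‖ :=
          norm_pos_iff.mpr (Nat.cast_ne_zero.mpr hi0)
        have h1 : ‖a ij.1‖ ≤ B / ‖((ij.1 : ℕ) : k)‖ := by
          rw [le_div_iff₀ hjk0]
          exact haj _ hi1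
        have hxpow : ‖x‖ ^ n = ‖x‖ ^ (n - 1) * ‖x‖ := by
          rw [← pow_succ]
          congr 1
          omega
        have hlt : ‖x‖ ^ n < ‖((ij.1 : ℕ) : k)‖ * ‖x‖ := by
          rw [hxpow]
          exact mul_lt_mul_of_pos_right hkey hxn0
        rw [norm_mul, norm_mul, norm_pow]
        have hg0n : 0 < ‖g.eval 0‖ := norm_pos_iff.mpr hg0
        calc ‖a ij.1‖ * ‖PowerSeries.coeff ij.2 G‖ * ‖x‖ ^ n
            ≤ (B / ‖((ij.1 : ℕ) : k)‖) * ‖g.eval 0‖ * ‖x‖ ^ n := by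
              refine mul_le_mul_of_nonneg_right ?_ (by positivity)
              exact mul_le_mul h1 (hgb ij.2) (norm_nonneg _)
                (le_of_lt (div_pos hB0 hjk0))
          _ < B * ‖g.eval 0‖ * ‖x‖ := by
              rw [div_mul_eq_mul_div, div_mul_eq_mul_div, div_lt_iff₀ hjk0]
              nlinarith [mul_lt_mul_of_pos_left hlt (mul_pos hB0 hg0n)]
  rw [hxf, zero_sub, norm_neg, hcnorm] at hfinal
  exact lt_irrefl _ hfinal
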